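/- Let G be a 2-connected graph with minimum degree at least k ≥ 2 and n > k vertices, and suppose G has no cycle on all n vertices. Then G contains a cycle C and a vertex u ∉ V(C) such that u has at least one neighbor outside V(C) or G contains a cycle of length at least 2k. -/

import Mathlib

open SimpleGraph

/-- `P'` is aligned with `P` (both starting at `x`): shared vertices appear in the
same relative order. -/
def Aligned {V : Type*} [DecidableEq V] {G : SimpleGraph V} {x a b : V}
    (P : G.Walk x a) (P' : G.Walk x b) : Prop :=
  ∀ u v : V, u ∈ P.support → v ∈ P.support → u ∈ P'.support → v ∈ P'.support →
    P.support.idxOf u < P.support.idxOf v →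
    P'.support.idxOf u < P'.support.idxOf v

/-- Two paths with common origin `x` are internally disjoint: every common vertex is a
common endpoint. -/
def IntDisjoint {V : Type*} {G : SimpleGraph V} {x a b : V}
    (P : G.Walk x a) (Q : G.Walk x b) : Prop :=
  ∀ v : V, v ∈ P.support → v ∈ Q.support → (v = x ∨ v = a) ∧ (v = x ∨ v = b)

/-- 2-connected: at least 3 vertices, connected, and no cut vertex. -/
def TwoConnected {V : Type*} [Fintype V] (G : SimpleGraph V) : Prop :=
  3 ≤ Fintype.card V ∧ G.Connected ∧
    ∀ v : V, ((⊤ : G.Subgraph).deleteVerts {v}).coe.Connected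

/-- A lollipop: a cycle `C` and a path `P` whose vertex sets meet exactly in the
vertex `a`, an endpoint of `P` lying on `C`. -/
def IsLollipop {V : Type*} {G : SimpleGraph V} {v a w : V}
    (C : G.Walk v v) (P : G.Walk a w) : Prop :=
  C.IsCycle ∧ P.IsPath ∧ a ∈ C.support ∧ ∀ u ∈ C.support, u ∈ P.support → u = a


section Helpers
variable {V : Type*} {G : SimpleGraph V}

lemma edge_getVert_mem {x y : V} {W : G.Walk x y} {i : ℕ} (hi : i < W.length) :
    s(W.getVert i, W.getVert (i+1)) ∈ W.edges := by
  induction W generalizing i with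
  | nil => simp at hi
  | cons h p ih =>
    cases i with
    | zero => simp [Walk.getVert_zero, Walk.getVert_cons_succ]
    | succ n =>
      simp only [Walk.getVert_cons_succ, Walk.edges_cons, List.mem_cons]
      right
      exact ih (by simpa [Walk.length_cons, Nat.succ_lt_succ_iff] using hi)

lemma support_getElem_eq_getVert {x y : V} (W : G.Walk x y) (i : ℕ)
    (hi : i < W.support.length) : W.support[i] = W.getVert i := by
  induction W generalizing i with
  | nil =>
    simp only [Walk.support_nil, List.length_singleton] at hi
    interval_cases i
    simp [Walk.getVert_zero]
  | cons h p ih =>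
    cases i with
    | zero => simp [Walk.support_cons]
    | succ n =>
      simp only [Walk.support_cons, List.getElem_cons_succ, Walk.getVert_cons_succ]
      exact ih n (by simpa [Walk.support_cons] using hi)

lemma path_first_edge {x w y : V} {Q : G.Walk x w} (hQ : Q.IsPath)
    (he : s(x, y) ∈ Q.edges) : ∃ (h : G.Adj x y) (Q' : G.Walk y w), Q = Walk.cons h Q' := by
  cases Q with
  | nil => simp at he
  | cons h' Q' =>
    rw [Walk.edges_cons, List.mem_cons] at he
    rcases he with he | he
    · rw [Sym2.eq_iff] at he
      rcases he with ⟨-, rfl⟩ | ⟨rfl, rfl⟩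
      · exact ⟨h', Q', rfl⟩
      · exact absurd rfl h'.ne
    · exact absurd (Walk.fst_mem_support_of_mem_edges Q' he)
        ((Walk.cons_isPath_iff _ _).1 hQ).2

lemma concat_isPath {x y z : V} {p : G.Walk x y} (hp : p.IsPath) (h : G.Adj y z)
    (hz : z ∉ p.support) : (p.concat h).IsPath := by
  rw [Walk.isPath_def, Walk.support_concat]
  rw [Walk.isPath_def] at hp
  simpa [List.concat_eq_append, List.nodup_append] using ⟨hp, fun a ha h => hz (h ▸ ha)⟩

lemma longer_cycle {u a b : V} {D : G.Walk a a} (hD : D.IsCycle) (hu : u ∉ D.support)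
    (hab : s(a, b) ∈ D.edges) (hua : G.Adj u a) (hub : G.Adj u b) :
    ∃ (w : V) (E : G.Walk w w), E.IsCycle ∧ E.length = D.length + 1 := by
  have hlen3 := hD.three_le_length
  cases D with
  | nil => simp at hab
  | cons h T =>
    rename_i c
    have hT : T.IsPath ∧ s(a, c) ∉ T.edges := (Walk.cons_isCycle_iff T h).1 hD
    simp only [Walk.support_cons, List.mem_cons, not_or] at hu
    obtain ⟨hua', huT⟩ := hu
    rw [Walk.edges_cons, List.mem_cons] at hab
    rcases hab with hab | hab
    · -- first edge: b = c
      rw [Sym2.eq_iff] at hab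
      rcases hab with ⟨-, rfl⟩ | ⟨rfl, rfl⟩
      swap
      · exact absurd rfl h.ne
      -- D = cons (a~b) T, T : Walk b a.  New cycle: u - b - ... - a - u
      have hba : b ≠ a := by
        intro hba
        subst hba
        have hnil : T = Walk.nil :=
          congrArg Subtype.val (SimpleGraph.Path.loop_eq (⟨T, hT.1⟩ : G.Path _ _))
        subst hnil
        simp at hlen3
      refine ⟨u, Walk.cons hub (T.concat hua.symm), ?_, by simp [Walk.length_concat]⟩
      rw [Walk.cons_isCycle_iff]
      refine ⟨concat_isPath hT.1 hua.symm huT, ?_⟩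
      rw [Walk.edges_concat, List.concat_eq_append, List.mem_append]
      rintro (hmem | hmem)
      · exact huT (Walk.fst_mem_support_of_mem_edges T hmem)
      · simp only [List.mem_singleton, Sym2.eq_iff] at hmem
        rcases hmem with ⟨rfl, -⟩ | ⟨-, rfl⟩
        · exact hua' rfl
        · exact hba rfl
    · -- edge inside T; T : Walk c a, ends at a
      have hrev : s(a, b) ∈ T.reverse.edges := by
        rw [Walk.edges_reverse]; simpa using hab
      obtain ⟨hab', Q, hQ⟩ := path_first_edge hT.1.reverse hrev
      -- T.reverse = cons (a~b) Q, Q : Walk b c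
      have haQ : a ∉ Q.support := by
        have := (Walk.cons_isPath_iff _ _).1 (hQ ▸ hT.1.reverse)
        exact this.2
      have hQpath : Q.IsPath := ((Walk.cons_isPath_iff _ _).1 (hQ ▸ hT.1.reverse)).1
      have huQ : u ∉ Q.support := by
        intro hmem
        apply huT
        have : u ∈ T.reverse.support := by rw [hQ, Walk.support_cons]; simp [hmem]
        simpa using this
      have hbc : b ∈ T.support := Walk.snd_mem_support_of_mem_edges T hab
      -- new cycle: u - a - c - ... - b - u  i.e. cons hua (cons h (Q.reverse.concat hub.symm))
      have hRpath : Q.reverse.IsPath := hQpath.reverse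
      have huR : u ∉ Q.reverse.support := by simpa using huQ
      have hW : (Q.reverse.concat hub.symm).IsPath := concat_isPath hRpath hub.symm huR
      have haW : a ∉ (Q.reverse.concat hub.symm).support := by
        rw [Walk.support_concat, List.mem_append]
        rintro (hmem | hmem)
        · exact haQ (by simpa using hmem)
        · simp only [List.mem_singleton] at hmem
          exact hua' hmem.symm
      refine ⟨u, Walk.cons hua (Walk.cons h (Q.reverse.concat hub.symm)), ?_, ?_⟩
      · rw [Walk.cons_isCycle_iff]
        constructor
        · rw [Walk.cons_isPath_iff]
          exact ⟨hW, haW⟩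
        · rw [Walk.edges_cons, List.mem_cons]
          rintro (hmem | hmem)
          · rw [Sym2.eq_iff] at hmem
            rcases hmem with ⟨h1, -⟩ | ⟨h1, -⟩
            · exact hua' h1
            · exact huT (h1 ▸ T.start_mem_support)
          · rw [Walk.edges_concat, List.concat_eq_append, List.mem_append] at hmem
            rcases hmem with hmem | hmem
            · exact huR (Walk.fst_mem_support_of_mem_edges _ hmem)
            · simp only [List.mem_singleton, Sym2.eq_iff] at hmem
              rcases hmem with ⟨h1, -⟩ | ⟨-, h2⟩
              · exact huT (h1 ▸ hbc)
              · exact hab'.ne h2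
      · have hlQ : T.length = Q.length + 1 := by
          have := congrArg Walk.length hQ
          simpa using this
        simp only [Walk.length_cons, Walk.length_concat, Walk.length_reverse, hlQ]

lemma mem_rotate_support [DecidableEq V] {v a : V} {C : G.Walk v v} (h : a ∈ C.support) (x : V) :
    x ∈ (C.rotate a h).support ↔ x ∈ C.support := by
  simp only [Walk.rotate, Walk.mem_support_append_iff]
  conv_rhs => rw [← Walk.take_spec C h, Walk.mem_support_append_iff]
  tauto

lemma length_rotate [DecidableEq V] {v a : V} {C : G.Walk v v} (h : a ∈ C.support) :
    (C.rotate a h).length = C.length := by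
  have := (Walk.rotate_darts C a h).perm.length_eq
  simpa [Walk.length_darts] using this

end Helpers


section Main
variable {V : Type*} [Fintype V] [DecidableEq V] {G : SimpleGraph V} [DecidableRel G.Adj]

omit [DecidableEq V] in
lemma exists_cycle_aux (hconn : G.Connected) (hdeg2 : ∀ v : V, 2 ≤ G.degree v) :
    ∃ (v : V) (C : G.Walk v v), C.IsCycle := by
  by_contra hno
  push_neg at hno
  have hacyc : G.IsAcyclic := fun v c hc => hno v c hc
  have htree : G.IsTree := ⟨hconn, hacyc⟩
  have hcount := htree.card_edgeFinset
  have hsum := G.sum_degrees_eq_twice_card_edges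
  have hge : Fintype.card V * 2 ≤ ∑ v, G.degree v := by
    calc Fintype.card V * 2 = ∑ _v : V, 2 := by
          simp [Finset.sum_const, Finset.card_univ, Nat.mul_comm]
      _ ≤ ∑ v, G.degree v := Finset.sum_le_sum fun v _ => hdeg2 v
  have hpos : 1 ≤ Fintype.card V := Fintype.card_pos_iff.2 hconn.nonempty
  omega

theorem main_thm {k : ℕ} (hk : 2 ≤ k) (hn : k < Fintype.card V)
    (hG : TwoConnected G) (hdeg : ∀ v : V, k ≤ G.degree v)
    (hnoham : ¬ ∃ (v : V) (C : G.Walk v v), C.IsCycle ∧ ∀ u : V, u ∈ C.support) :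
    (∃ (v : V) (C : G.Walk v v) (u b : V),
        C.IsCycle ∧ u ∉ C.support ∧ G.Adj u b ∧ b ∉ C.support) ∨
      (∃ (v : V) (C : G.Walk v v), C.IsCycle ∧ 2 * k ≤ C.length) := by
  classical
  obtain ⟨hcard3, hconn, -⟩ := hG
  have hdeg2 : ∀ v : V, 2 ≤ G.degree v := fun v => le_trans hk (hdeg v)
  obtain ⟨v0, C0, hC0⟩ := exists_cycle_aux hconn hdeg2
  set S : Set ℕ := {l | ∃ (v : V) (C : G.Walk v v), C.IsCycle ∧ C.length = l} with hS
  have hSne : S.Nonempty := ⟨C0.length, v0, C0, hC0, rfl⟩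
  have hSbdd : BddAbove S := by
    refine ⟨Fintype.card V, ?_⟩
    rintro l ⟨v, C, hC, rfl⟩
    have htn : C.support.tail.Nodup := ((Walk.isCycle_def C).1 hC).2.2
    have := htn.length_le_card
    have hsl : C.support.length = C.length + 1 := C.length_support
    simp only [List.length_tail, hsl] at this
    omega
  obtain ⟨v, C, hC, hCL⟩ := Nat.sSup_mem hSne hSbdd
  have hmax : ∀ (w : V) (D : G.Walk w w), D.IsCycle → D.length ≤ sSup S :=
    fun w D hD => le_csSup hSbdd ⟨w, D, hD, rfl⟩
  push_neg at hnoham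
  obtain ⟨u, hu⟩ := hnoham v C hC
  by_cases hnb : ∃ b, G.Adj u b ∧ b ∉ C.support
  · obtain ⟨b, h1, h2⟩ := hnb
    exact Or.inl ⟨v, C, u, b, hC, hu, h1, h2⟩
  push_neg at hnb
  right
  refine ⟨v, C, hC, ?_⟩
  set n := C.length with hn'
  have hL3 : 3 ≤ n := hC.three_le_length
  have htn : C.support.tail.Nodup := ((Walk.isCycle_def C).1 hC).2.2
  have hsl : C.support.length = n + 1 := C.length_support
  have htl : C.support.tail.length = n := by
    simp [List.length_tail, hsl]
  -- tail entries are getVert (i+1)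
  have hfi : ∀ (i : ℕ) (hi : i < n),
      C.support.tail[i]'(by omega) = C.getVert (i + 1) := by
    intro i hi
    rw [List.getElem_tail]
    exact support_getElem_eq_getVert C (i + 1) (by omega)
  -- injectivity
  have hinj : ∀ i j : ℕ, i < n → j < n →
      C.getVert (i + 1) = C.getVert (j + 1) → i = j := by
    intro i j hi hj hij
    rw [← hfi i hi, ← hfi j hj] at hij
    exact (htn.getElem_inj_iff (hi := by omega) (hj := by omega)).1 hij
  -- surjectivity onto support
  have hsurj : ∀ b ∈ C.support, ∃ i : ℕ, i < n ∧ C.getVert (i + 1) = b := by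
    intro b hb
    obtain ⟨j, hj, hjb⟩ := List.mem_iff_getElem.1 hb
    rw [support_getElem_eq_getVert C j hj] at hjb
    rcases j with _ | m
    · refine ⟨n - 1, by omega, ?_⟩
      rw [Nat.sub_add_cancel (by omega)]
      rw [Walk.getVert_zero] at hjb
      rw [hn', Walk.getVert_length]
      exact hjb
    · exact ⟨m, by omega, hjb⟩
  -- getVert in support
  have hmem : ∀ i : ℕ, i < n → C.getVert (i + 1) ∈ C.support := by
    intro i hi
    rw [← hfi i hi]
    exact List.mem_of_mem_tail (List.getElem_mem _)
  set I : Finset (Fin n) :=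
    Finset.univ.filter (fun i : Fin n => G.Adj u (C.getVert ((i : ℕ) + 1))) with hI
  -- k ≤ I.card
  have hki : k ≤ I.card := by
    refine le_trans (hdeg u) ?_
    rw [← card_neighborFinset_eq_degree]
    have h0 : (0 : ℕ) < n := by omega
    refine Finset.card_le_card_of_injOn
      (fun b => if h : ∃ i : ℕ, i < n ∧ C.getVert (i + 1) = b
        then ⟨h.choose, h.choose_spec.1⟩ else ⟨0, h0⟩) ?_ ?_
    · intro b hb
      rw [Finset.mem_coe, mem_neighborFinset] at hb
      have hbs : b ∈ C.support := hnb b hb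
      have hex := hsurj b hbs
      simp only [hex, dif_pos]
      rw [Finset.mem_coe, hI, Finset.mem_filter]
      exact ⟨Finset.mem_univ _, by rw [hex.choose_spec.2]; exact hb⟩
    · intro b hb b' hb' hbb'
      have hbs : b ∈ C.support := hnb b ((mem_neighborFinset _ _ _).1 hb)
      have hbs' : b' ∈ C.support := hnb b' ((mem_neighborFinset _ _ _).1 hb')
      have hex := hsurj b hbs
      have hex' := hsurj b' hbs'
      simp only [hex, hex', dif_pos] at hbb'
      have : hex.choose = hex'.choose := by simpa using congrArg Fin.val hbb'
      rw [← hex.choose_spec.2, ← hex'.choose_spec.2, this]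
  -- successor map
  have hσlt : ∀ i : Fin n, ((i : ℕ) + 1) % n < n := fun i => Nat.mod_lt _ (by omega)
  set σ : Fin n → Fin n := fun i => ⟨((i : ℕ) + 1) % n, hσlt i⟩ with hσ
  have hmod : ∀ m : ℕ, m < n → (m + 1) % n = if m + 1 = n then 0 else m + 1 := by
    intro m hm
    by_cases h : m + 1 = n
    · simp [h, Nat.mod_self]
    · rw [if_neg h, Nat.mod_eq_of_lt (by omega)]
  have hσinj : Function.Injective σ := by
    intro i j h
    have hval : ((i : ℕ) + 1) % n = ((j : ℕ) + 1) % n := congrArg Fin.val h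
    rw [hmod _ i.isLt, hmod _ j.isLt] at hval
    have hi := i.isLt
    have hj := j.isLt
    apply Fin.ext
    split_ifs at hval <;> omega
  -- cycle edges between consecutive
  have hedge : ∀ i : Fin n,
      s(C.getVert ((i : ℕ) + 1), C.getVert (((σ i : Fin n) : ℕ) + 1)) ∈ C.edges := by
    intro i
    show s(C.getVert ((i : ℕ) + 1), C.getVert ((((i : ℕ) + 1) % n) + 1)) ∈ C.edges
    rw [hmod _ i.isLt]
    by_cases h : (i : ℕ) + 1 = n
    · rw [if_pos h, h]
      have h1 : C.getVert n = C.getVert 0 := by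
        rw [Walk.getVert_zero, hn', Walk.getVert_length]
      rw [h1]
      exact edge_getVert_mem (by omega)
    · rw [if_neg h]
      exact edge_getVert_mem (show (i : ℕ) + 1 < n by have := i.isLt; omega)
  -- disjointness via maximality
  have hdisj : Disjoint I (I.image σ) := by
    rw [Finset.disjoint_right]
    rintro j hj hjI
    obtain ⟨i, hi, rfl⟩ := Finset.mem_image.1 hj
    rw [hI, Finset.mem_filter] at hi hjI
    have hua : G.Adj u (C.getVert ((i : ℕ) + 1)) := hi.2
    have hub : G.Adj u (C.getVert (((σ i : Fin n) : ℕ) + 1)) := hjI.2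
    have ha : C.getVert ((i : ℕ) + 1) ∈ C.support := hmem _ i.isLt
    set D := C.rotate _ ha with hD
    have hDc : D.IsCycle := hC.rotate ha
    have huD : u ∉ D.support := by
      rw [hD, mem_rotate_support]
      exact hu
    have heD : s(C.getVert ((i : ℕ) + 1), C.getVert (((σ i : Fin n) : ℕ) + 1)) ∈ D.edges :=
      (Walk.rotate_edges C _ ha).mem_iff.2 (hedge i)
    obtain ⟨w, E, hE, hElen⟩ := longer_cycle hDc huD heD hua hub
    have hle := hmax w E hE
    rw [hElen, hD, length_rotate, ← hn', hCL] at hle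
    omega
  -- final count
  have hcard : I.card + (I.image σ).card ≤ n := by
    rw [← Finset.card_union_of_disjoint hdisj]
    calc (I ∪ I.image σ).card ≤ Fintype.card (Fin n) := Finset.card_le_univ _
      _ = n := Fintype.card_fin n
  rw [Finset.card_image_of_injective _ hσinj] at hcard
  omega
end Main


/-- In a non-Hamiltonian 2-connected graph with minimum degree at least `k ≥ 2`: either
some cycle `C` has an off-cycle vertex `u` with a neighbor off `C`, or `G` has a cycle
of length at least `2k`. -/
theorem stmt_18 {V : Type*} [Fintype V] [DecidableEq V] {G : SimpleGraph V}
    [DecidableRel G.Adj] {k : ℕ} (hk : 2 ≤ k) (hn : k < Fintype.card V)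
    (hG : TwoConnected G) (hdeg : ∀ v : V, k ≤ G.degree v)
    (hnoham : ¬ ∃ (v : V) (C : G.Walk v v), C.IsCycle ∧ ∀ u : V, u ∈ C.support) :
    (∃ (v : V) (C : G.Walk v v) (u b : V),
        C.IsCycle ∧ u ∉ C.support ∧ G.Adj u b ∧ b ∉ C.support) ∨
      (∃ (v : V) (C : G.Walk v v), C.IsCycle ∧ 2 * k ≤ C.length) := by
  exact main_thm hk hn hG hdeg hnoham
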